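/- arXiv:1009.2111 — 3 statements merged into one kernel-verified Lean document; each statement's English description precedes it below -/
import Mathlib

section
/- The rate recursion has the closed form S(ψ,r,k): for every integer k ≥ 0, ρ(k) = S(ψ,r,k). Here S(ψ,r,k) is defined as follows: if S̃₁(ψ,r) ≥ 1/2 then S(ψ,r,k) = S₁(ψ,k) for k ≤ K₁(ψ,r) and S(ψ,r,k) = r + 1/4 for k ≥ K₁(ψ,r) + 1; if S̃₁(ψ,r) < 1/2 then S(ψ,r,k) = S₁(ψ,k) for k ≤ K₁(ψ,r), S(ψ,r,k) = S₂(S̃₁(ψ,r), r, k − K₁(ψ,r)) for K₁(ψ,r) < k ≤ K₁(ψ,r) + K̃₂(ψ,r), and S(ψ,r,k) = r + 1/4 for k ≥ K₁(ψ,r) + K̃₂(ψ,r) + 1. -/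
/-!
Statement 0: closed form `S(ψ,r,k)` for the rate recursion of the k-step
semiparametric MLE (Theorem 1 of the paper).
-/

/-- `intLe x` is the smallest nonnegative integer `≥ x` (the paper's `int[x]`). -/
noncomputable def intLe (x : ℝ) : ℕ := sInf {k : ℕ | x ≤ (k : ℝ)}

/-- The rate sequence `ρ` of Lemma 1: `ρ(0) = ψ` and the three-stage recursion. -/
noncomputable def rateSeq (r ψ : ℝ) : ℕ → ℝ
  | 0 => ψ
  | k + 1 =>
    if rateSeq r ψ k < r then (3 / 2) * rateSeq r ψ k
    else if rateSeq r ψ k < 1 / 2 then r + rateSeq r ψ k / 2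
    else r + 1 / 4

/-- `S₁(ψ,k) = ψ (3/2)^k`. -/
noncomputable def S1 (ψ : ℝ) (k : ℕ) : ℝ := ψ * (3 / 2) ^ k

/-- `K₁(ψ,r) = int[log(r/ψ)/log(3/2)]`. -/
noncomputable def K1 (ψ r : ℝ) : ℕ := intLe (Real.log (r / ψ) / Real.log (3 / 2))

/-- `S̃₁(ψ,r) = S₁(ψ, K₁(ψ,r))`. -/
noncomputable def S1t (ψ r : ℝ) : ℝ := S1 ψ (K1 ψ r)

/-- `S₂(x,r,k) = 2r + 2^{−k}(x − 2r)`. -/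
noncomputable def S2 (x r : ℝ) (k : ℕ) : ℝ := 2 * r + ((2 : ℝ)⁻¹) ^ k * (x - 2 * r)

/-- `K₂(x,r) = int[log((2r−x)/(2r−1/2))/log 2]`. -/
noncomputable def K2 (x r : ℝ) : ℕ :=
  intLe (Real.log ((2 * r - x) / (2 * r - 1 / 2)) / Real.log 2)

/-- `K̃₂(ψ,r) = K₂(S̃₁(ψ,r), r)`. -/
noncomputable def K2t (ψ r : ℝ) : ℕ := K2 (S1t ψ r) r

/-- The closed form `S(ψ,r,k)` from Theorem 1. -/
noncomputable def Sclosed (ψ r : ℝ) (k : ℕ) : ℝ :=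
  if 1 / 2 ≤ S1t ψ r then
    (if k ≤ K1 ψ r then S1 ψ k else r + 1 / 4)
  else
    (if k ≤ K1 ψ r then S1 ψ k
     else if k ≤ K1 ψ r + K2t ψ r then S2 (S1t ψ r) r (k - K1 ψ r)
     else r + 1 / 4)

section Aux

lemma intLe_le (x : ℝ) : x ≤ (intLe x : ℝ) :=
  Nat.sInf_mem (⟨⌈x⌉₊, Nat.le_ceil x⟩ : Set.Nonempty {k : ℕ | x ≤ (k : ℝ)})

lemma lt_of_lt_intLe {k : ℕ} {x : ℝ} (h : k < intLe x) : (k : ℝ) < x := by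
  by_contra hc
  push_neg at hc
  have h2 : intLe x ≤ k := Nat.sInf_le (show k ∈ {k : ℕ | x ≤ (k : ℝ)} from hc)
  omega

lemma log32_pos : (0 : ℝ) < Real.log (3 / 2) := Real.log_pos (by norm_num)

lemma log2_pos : (0 : ℝ) < Real.log 2 := Real.log_pos (by norm_num)

lemma S1_lt_r {r ψ : ℝ} (hr : 0 < r) (hψ : 0 < ψ) {k : ℕ} (hk : k < K1 ψ r) :
    S1 ψ k < r := by
  have h := lt_of_lt_intLe hk
  have h1 : Real.log ((3 / 2 : ℝ) ^ k) < Real.log (r / ψ) := by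
    rw [Real.log_pow]
    exact (lt_div_iff₀ log32_pos).mp h
  have hp : (0 : ℝ) < (3 / 2 : ℝ) ^ k := by positivity
  have hd : (0 : ℝ) < r / ψ := by positivity
  have h2 : (3 / 2 : ℝ) ^ k < r / ψ := by
    have := Real.exp_lt_exp.mpr h1
    rwa [Real.exp_log hp, Real.exp_log hd] at this
  rw [S1]
  calc ψ * (3 / 2 : ℝ) ^ k < ψ * (r / ψ) := by
        exact mul_lt_mul_of_pos_left h2 hψ
    _ = r := by field_simp

lemma r_le_S1t {r ψ : ℝ} (hr : 0 < r) (hψ : 0 < ψ) : r ≤ S1t ψ r := by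
  have h := intLe_le (Real.log (r / ψ) / Real.log (3 / 2))
  have h1 : Real.log (r / ψ) ≤ Real.log ((3 / 2 : ℝ) ^ K1 ψ r) := by
    rw [Real.log_pow]
    exact (div_le_iff₀ log32_pos).mp h
  have hp : (0 : ℝ) < (3 / 2 : ℝ) ^ K1 ψ r := by positivity
  have hd : (0 : ℝ) < r / ψ := by positivity
  have h2 : r / ψ ≤ (3 / 2 : ℝ) ^ K1 ψ r := by
    have := Real.exp_le_exp.mpr h1
    rwa [Real.exp_log hd, Real.exp_log hp] at this
  rw [S1t, S1]
  calc r = ψ * (r / ψ) := by field_simp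
    _ ≤ ψ * (3 / 2 : ℝ) ^ K1 ψ r := mul_le_mul_of_nonneg_left h2 hψ.le

lemma S2_lt_half {x r : ℝ} (hr : 1 / 4 < r) (hx : x < 1 / 2) {j : ℕ}
    (hj : j < K2 x r) : S2 x r j < 1 / 2 := by
  have h := lt_of_lt_intLe hj
  have hden : (0 : ℝ) < 2 * r - 1 / 2 := by linarith
  have hnum : (0 : ℝ) < 2 * r - x := by linarith
  have h1 : Real.log ((2 : ℝ) ^ j) < Real.log ((2 * r - x) / (2 * r - 1 / 2)) := by
    rw [Real.log_pow]
    exact (lt_div_iff₀ log2_pos).mp h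
  have hp : (0 : ℝ) < (2 : ℝ) ^ j := by positivity
  have hd : (0 : ℝ) < (2 * r - x) / (2 * r - 1 / 2) := by positivity
  have h2 : (2 : ℝ) ^ j < (2 * r - x) / (2 * r - 1 / 2) := by
    have := Real.exp_lt_exp.mpr h1
    rwa [Real.exp_log hp, Real.exp_log hd] at this
  have key : (2 : ℝ) ^ j * (2 * r - 1 / 2) < 2 * r - x := (lt_div_iff₀ hden).mp h2
  rw [S2, inv_pow]
  have hinv : (2 : ℝ) ^ j * ((2 : ℝ) ^ j)⁻¹ = 1 := mul_inv_cancel₀ (ne_of_gt hp)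
  have hinvpos : (0 : ℝ) < ((2 : ℝ) ^ j)⁻¹ := by positivity
  nlinarith [mul_lt_mul_of_pos_right key hinvpos]

lemma half_le_S2_K2 {x r : ℝ} (hr : 1 / 4 < r) (hx : x < 1 / 2) :
    1 / 2 ≤ S2 x r (K2 x r) := by
  have h := intLe_le (Real.log ((2 * r - x) / (2 * r - 1 / 2)) / Real.log 2)
  have hden : (0 : ℝ) < 2 * r - 1 / 2 := by linarith
  have hnum : (0 : ℝ) < 2 * r - x := by linarith
  have h1 : Real.log ((2 * r - x) / (2 * r - 1 / 2)) ≤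
      Real.log ((2 : ℝ) ^ K2 x r) := by
    rw [Real.log_pow]
    exact (div_le_iff₀ log2_pos).mp h
  have hp : (0 : ℝ) < (2 : ℝ) ^ K2 x r := by positivity
  have hd : (0 : ℝ) < (2 * r - x) / (2 * r - 1 / 2) := by positivity
  have h2 : (2 * r - x) / (2 * r - 1 / 2) ≤ (2 : ℝ) ^ K2 x r := by
    have := Real.exp_le_exp.mpr h1
    rwa [Real.exp_log hd, Real.exp_log hp] at this
  have key : 2 * r - x ≤ (2 : ℝ) ^ K2 x r * (2 * r - 1 / 2) :=
    (div_le_iff₀ hden).mp h2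
  rw [S2, inv_pow]
  have hinv : (2 : ℝ) ^ K2 x r * ((2 : ℝ) ^ K2 x r)⁻¹ = 1 :=
    mul_inv_cancel₀ (ne_of_gt hp)
  have hinvpos : (0 : ℝ) < ((2 : ℝ) ^ K2 x r)⁻¹ := by positivity
  nlinarith [mul_le_mul_of_nonneg_right key hinvpos.le]

lemma x_le_S2 {x r : ℝ} (hx : x ≤ 2 * r) (j : ℕ) : x ≤ S2 x r j := by
  rw [S2]
  have h1 : ((2 : ℝ)⁻¹) ^ j ≤ 1 := pow_le_one₀ (by norm_num) (by norm_num)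
  have h2 : (0 : ℝ) < ((2 : ℝ)⁻¹) ^ j := by positivity
  nlinarith

lemma S2_succ (x r : ℝ) (j : ℕ) : r + S2 x r j / 2 = S2 x r (j + 1) := by
  simp only [S2, pow_succ]
  ring

lemma Sclosed_le {ψ r : ℝ} {k : ℕ} (h : k ≤ K1 ψ r) : Sclosed ψ r k = S1 ψ k := by
  unfold Sclosed
  split_ifs <;> first | rfl | omega

lemma Sclosed_A {ψ r : ℝ} {k : ℕ} (hhalf : 1 / 2 ≤ S1t ψ r) (h : K1 ψ r < k) :
    Sclosed ψ r k = r + 1 / 4 := by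
  rw [Sclosed, if_pos hhalf, if_neg (by omega : ¬ k ≤ K1 ψ r)]

lemma Sclosed_B_mid {ψ r : ℝ} {k : ℕ} (hhalf : ¬ (1 / 2 ≤ S1t ψ r))
    (h1 : K1 ψ r < k) (h2 : k ≤ K1 ψ r + K2t ψ r) :
    Sclosed ψ r k = S2 (S1t ψ r) r (k - K1 ψ r) := by
  rw [Sclosed, if_neg hhalf]
  split_ifs <;> first | rfl | omega

lemma Sclosed_B_tail {ψ r : ℝ} {k : ℕ} (hhalf : ¬ (1 / 2 ≤ S1t ψ r))
    (h : K1 ψ r + K2t ψ r < k) : Sclosed ψ r k = r + 1 / 4 := by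
  rw [Sclosed, if_neg hhalf]
  split_ifs <;> first | rfl | omega

end Aux

/-- For `1/4 < r ≤ 1/2` and `0 < ψ ≤ 1/2`, the rate recursion has the
closed form `S(ψ,r,k)`: for every `k ≥ 0`, `ρ(k) = S(ψ,r,k)`. -/
theorem rateSeq_eq_Sclosed (r ψ : ℝ) (hr1 : 1 / 4 < r) (hr2 : r ≤ 1 / 2)
    (hψ1 : 0 < ψ) (hψ2 : ψ ≤ 1 / 2) (k : ℕ) :
    rateSeq r ψ k = Sclosed ψ r k := by
  have hr0 : (0 : ℝ) < r := by linarith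
  have hrS : r ≤ S1t ψ r := r_le_S1t hr0 hψ1
  induction k with
  | zero =>
    have h0 : Sclosed ψ r 0 = S1 ψ 0 := Sclosed_le (Nat.zero_le _)
    rw [h0, S1]
    simp [rateSeq]
  | succ k ih =>
    rcases lt_or_ge k (K1 ψ r) with hk | hk
    · -- phase 1
      have hρ : rateSeq r ψ k = S1 ψ k := by rw [ih, Sclosed_le hk.le]
      have hlt : rateSeq r ψ k < r := by rw [hρ]; exact S1_lt_r hr0 hψ1 hk
      rw [rateSeq, if_pos hlt, hρ, Sclosed_le (by omega : k + 1 ≤ K1 ψ r), S1, S1,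
        pow_succ]
      ring
    · by_cases hhalf : 1 / 2 ≤ S1t ψ r
      · -- case A
        rcases eq_or_lt_of_le hk with heq | hgt
        · have hρ : rateSeq r ψ k = S1t ψ r := by
            rw [ih, Sclosed_le (le_of_eq heq.symm)]
            rw [S1t, ← heq]
          rw [rateSeq, hρ, if_neg (not_lt.mpr hrS), if_neg (not_lt.mpr hhalf),
            Sclosed_A hhalf (by omega)]
        · have hρ : rateSeq r ψ k = r + 1 / 4 := by rw [ih, Sclosed_A hhalf hgt]
          rw [rateSeq, hρ, if_neg (by linarith), if_neg (by linarith),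
            Sclosed_A hhalf (by omega)]
      · -- case B
        push_neg at hhalf
        have hx2r : S1t ψ r ≤ 2 * r := by linarith
        have hM : 1 ≤ K2t ψ r := by
          by_contra hM0
          have hM0' : K2t ψ r = 0 := by omega
          have := half_le_S2_K2 (x := S1t ψ r) hr1 hhalf
          rw [show K2 (S1t ψ r) r = K2t ψ r from rfl, hM0'] at this
          rw [S2] at this
          simp at this
          linarith
        have hhalf' : ¬ (1 / 2 ≤ S1t ψ r) := not_le.mpr hhalf
        rcases lt_trichotomy k (K1 ψ r + K2t ψ r) with hkm | hkm | hkm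
        · -- middle: K1 ≤ k < K1 + K2t
          have hρ : rateSeq r ψ k = S2 (S1t ψ r) r (k - K1 ψ r) := by
            rcases eq_or_lt_of_le hk with heq | hgt
            · rw [ih, Sclosed_le (le_of_eq heq.symm)]
              rw [show k - K1 ψ r = 0 by omega, S2]
              rw [S1t, ← heq]
              simp
            · rw [ih, Sclosed_B_mid hhalf' hgt hkm.le]
          have hjlt : k - K1 ψ r < K2t ψ r := by omega
          have hS2lt : S2 (S1t ψ r) r (k - K1 ψ r) < 1 / 2 :=
            S2_lt_half hr1 hhalf hjlt
          have hS2ge : r ≤ S2 (S1t ψ r) r (k - K1 ψ r) :=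
            le_trans hrS (x_le_S2 hx2r _)
          rw [rateSeq, hρ, if_neg (not_lt.mpr hS2ge), if_pos hS2lt,
            Sclosed_B_mid hhalf' (by omega) (by omega),
            show k + 1 - K1 ψ r = (k - K1 ψ r) + 1 by omega]
          exact S2_succ _ _ _
        · -- k = K1 + K2t : switch to tail
          have hρ : rateSeq r ψ k = S2 (S1t ψ r) r (K2t ψ r) := by
            rw [ih, Sclosed_B_mid hhalf' (by omega) (by omega)]
            congr 1
            omega
          have hge : 1 / 2 ≤ S2 (S1t ψ r) r (K2t ψ r) :=
            half_le_S2_K2 hr1 hhalf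
          rw [rateSeq, hρ, if_neg (by linarith), if_neg (not_lt.mpr hge),
            Sclosed_B_tail hhalf' (by omega)]
        · -- tail
          have hρ : rateSeq r ψ k = r + 1 / 4 := by
            rw [ih, Sclosed_B_tail hhalf' hkm]
          rw [rateSeq, hρ, if_neg (by linarith), if_neg (by linarith),
            Sclosed_B_tail hhalf' (by omega)]
end

section
/- One has 0 < 2r − S̃₁(ψ,r) (so the logarithm below is defined), and the least integer k ≥ 0 such that ρ(k) > 1/2 equals k* = K₁(ψ,r) + ĩnt[log((2r − S̃₁(ψ,r))/(2r − 1/2))/log 2]. (In the paper this k* is the minimal number of Newton–Raphson iterations needed so that ‖θ̂ₙ^{(k*)} − θ̂ₙ‖ = o_P(n^{−1/2}), i.e. so that the k*-step estimator is semiparametric efficient.) -/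
/-- `intLt x` is the smallest nonnegative integer `> x` (the paper's `ĩnt[x]`). -/
noncomputable def intLt (x : ℝ) : ℕ := sInf {k : ℕ | x < (k : ℝ)}

private lemma logdiv_le_iff {b x : ℝ} (hb : 1 < b) (hx : 0 < x) (k : ℕ) :
    Real.log x / Real.log b ≤ (k : ℝ) ↔ x ≤ b ^ k := by
  rw [div_le_iff₀ (Real.log_pos hb), show (k : ℝ) * Real.log b = Real.log (b ^ k) from
    (Real.log_pow b k).symm, Real.log_le_log_iff hx (pow_pos (lt_trans one_pos hb) k)]

private lemma logdiv_lt_iff {b x : ℝ} (hb : 1 < b) (hx : 0 < x) (k : ℕ) :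
    Real.log x / Real.log b < (k : ℝ) ↔ x < b ^ k := by
  rw [div_lt_iff₀ (Real.log_pos hb), show (k : ℝ) * Real.log b = Real.log (b ^ k) from
    (Real.log_pow b k).symm, Real.log_lt_log_iff hx (pow_pos (lt_trans one_pos hb) k)]

/-- `0 < 2r − S̃₁(ψ,r)`, and the least `k ≥ 0` with `ρ(k) > 1/2`
equals `k* = K₁(ψ,r) + ĩnt[log((2r − S̃₁(ψ,r))/(2r − 1/2))/log 2]`. -/
theorem kstar_formula (r ψ : ℝ) (hr1 : 1 / 4 < r) (hr2 : r ≤ 1 / 2)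
    (hψ1 : 0 < ψ) (hψ2 : ψ ≤ 1 / 2) :
    0 < 2 * r - S1t ψ r ∧
    sInf {k : ℕ | 1 / 2 < rateSeq r ψ k} =
      K1 ψ r + intLt (Real.log ((2 * r - S1t ψ r) / (2 * r - 1 / 2)) / Real.log 2) := by
  have h32 : (1 : ℝ) < 3 / 2 := by norm_num
  have hr0 : (0 : ℝ) < r := by linarith
  -- characterization of K1
  have key : ∀ k : ℕ, Real.log (r / ψ) / Real.log (3 / 2) ≤ (k : ℝ) ↔ r ≤ ψ * (3 / 2) ^ k := by
    intro k
    rw [logdiv_le_iff h32 (div_pos hr0 hψ1) k, div_le_iff₀ hψ1, mul_comm]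
  have hne1 : Set.Nonempty {k : ℕ | Real.log (r / ψ) / Real.log (3 / 2) ≤ (k : ℝ)} := by
    obtain ⟨n, hn⟩ := exists_nat_ge (Real.log (r / ψ) / Real.log (3 / 2))
    exact ⟨n, hn⟩
  have hK1 : r ≤ ψ * (3 / 2) ^ (K1 ψ r) := (key _).mp (Nat.sInf_mem hne1)
  have hKmin : ∀ k < K1 ψ r, ψ * (3 / 2) ^ k < r := by
    intro k hk
    have h := Nat.notMem_of_lt_sInf
      (s := {k : ℕ | Real.log (r / ψ) / Real.log (3 / 2) ≤ (k : ℝ)}) hk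
    have h' : ¬ Real.log (r / ψ) / Real.log (3 / 2) ≤ (k : ℝ) := h
    rw [key k] at h'
    exact lt_of_not_ge h'
  -- phase 1
  have phase1 : ∀ k ≤ K1 ψ r, rateSeq r ψ k = ψ * (3 / 2) ^ k := by
    intro k
    induction k with
    | zero => intro _; simp [rateSeq]
    | succ n ih =>
      intro hk
      have hn : n < K1 ψ r := Nat.lt_of_succ_le hk
      have h1 : rateSeq r ψ n = ψ * (3 / 2) ^ n := ih (le_of_lt hn)
      have h2 : rateSeq r ψ n < r := by rw [h1]; exact hKmin n hn
      show (if rateSeq r ψ n < r then (3 / 2) * rateSeq r ψ n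
        else if rateSeq r ψ n < 1 / 2 then r + rateSeq r ψ n / 2 else r + 1 / 4)
          = ψ * (3 / 2) ^ (n + 1)
      rw [if_pos h2, h1, pow_succ]; ring
  have hS1t : S1t ψ r = ψ * (3 / 2) ^ (K1 ψ r) := rfl
  -- upper bound on s0
  have hs0ub : ψ * (3 / 2) ^ (K1 ψ r) < 2 * r := by
    rcases Nat.eq_zero_or_pos (K1 ψ r) with h | h
    · rw [h]; simpa using by linarith
    · obtain ⟨m, hm⟩ := Nat.exists_eq_succ_of_ne_zero (Nat.pos_iff_ne_zero.mp h)
      have h2 := hKmin m (by omega)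
      rw [hm, pow_succ]
      nlinarith [pow_pos (show (0:ℝ) < 3/2 by norm_num) m,
        mul_pos hψ1 (pow_pos (show (0:ℝ) < 3/2 by norm_num) m)]
  have hd : 0 < 2 * r - ψ * (3 / 2) ^ (K1 ψ r) := by linarith
  set s0 : ℝ := ψ * (3 / 2) ^ (K1 ψ r) with hs0def
  set d : ℝ := 2 * r - s0 with hddef
  have hh : (0 : ℝ) < 2 * r - 1 / 2 := by linarith
  set A : ℝ := d / (2 * r - 1 / 2) with hAdef
  have hA : 0 < A := div_pos hd hh
  -- characterization of J
  have key2 : ∀ j : ℕ, Real.log A / Real.log 2 < (j : ℝ) ↔ A < 2 ^ j := fun j =>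
    logdiv_lt_iff one_lt_two hA j
  have hne2 : Set.Nonempty {j : ℕ | Real.log A / Real.log 2 < (j : ℝ)} := by
    obtain ⟨n, hn⟩ := exists_nat_gt (Real.log A / Real.log 2)
    exact ⟨n, hn⟩
  set J : ℕ := intLt (Real.log A / Real.log 2) with hJdef
  have hJ1 : A < 2 ^ J := (key2 J).mp (Nat.sInf_mem hne2)
  have hJmin : ∀ j < J, ¬ A < 2 ^ j := by
    intro j hj hcon
    have h := Nat.notMem_of_lt_sInf
      (s := {j : ℕ | Real.log A / Real.log 2 < (j : ℝ)}) hj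
    exact h ((key2 j).mpr hcon)
  -- translation between `A < 2^j` and the closed form exceeding 1/2
  have hc : ∀ j : ℕ, (A < 2 ^ j ↔ 1 / 2 < 2 * r - d / 2 ^ j) := by
    intro j
    have hp : (0 : ℝ) < 2 ^ j := by positivity
    rw [hAdef, div_lt_iff₀ hh]
    constructor
    · intro h
      have : d / 2 ^ j < 2 * r - 1 / 2 := (div_lt_iff₀ hp).mpr (by nlinarith)
      linarith
    · intro h
      have h2 : d / 2 ^ j < 2 * r - 1 / 2 := by linarith
      nlinarith [(div_lt_iff₀ hp).mp h2]
  -- phase 2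
  have phase2 : ∀ j : ℕ, (∀ i < j, ¬ A < 2 ^ i) →
      rateSeq r ψ (K1 ψ r + j) = 2 * r - d / 2 ^ j := by
    intro j
    induction j with
    | zero =>
      intro _
      have h0 := phase1 (K1 ψ r) le_rfl
      rw [Nat.add_zero, h0, pow_zero]
      rw [hddef]; ring
    | succ n ih =>
      intro hcond
      have hprev := ih (fun i hi => hcond i (Nat.lt_succ_of_lt hi))
      have hle : 2 * r - d / 2 ^ n ≤ 1 / 2 := by
        by_contra hgt
        exact hcond n (Nat.lt_succ_self n) ((hc n).mpr (lt_of_not_ge hgt))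
      have hge : r ≤ 2 * r - d / 2 ^ n := by
        have h2 : d / 2 ^ n ≤ d := by
          apply div_le_self (le_of_lt (by rw [hddef]; linarith))
          exact one_le_pow₀ (by norm_num)
        have hdr : d ≤ r := by rw [hddef]; linarith
        linarith
      show (if rateSeq r ψ (K1 ψ r + n) < r then (3 / 2) * rateSeq r ψ (K1 ψ r + n)
        else if rateSeq r ψ (K1 ψ r + n) < 1 / 2 then r + rateSeq r ψ (K1 ψ r + n) / 2
        else r + 1 / 4) = 2 * r - d / 2 ^ (n + 1)
      rw [hprev, if_neg (not_lt.mpr hge)]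
      have hps : (2:ℝ) ^ (n+1) = 2 ^ n * 2 := pow_succ 2 n
      have hp : (0 : ℝ) < 2 ^ n := by positivity
      rcases lt_or_eq_of_le hle with hlt | heq
      · rw [if_pos hlt]
        field_simp
        ring
      · rw [if_neg (by rw [← heq]; exact lt_irrefl _)]
        have h3 : d / 2 ^ (n + 1) = (d / 2 ^ n) / 2 := by rw [hps]; ring
        rw [h3]; linarith
  constructor
  · rw [hS1t]; exact hd
  · have hgoalJ : intLt (Real.log ((2 * r - S1t ψ r) / (2 * r - 1 / 2)) / Real.log 2) = J := rfl
    rw [hgoalJ]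
    apply le_antisymm
    · apply Nat.sInf_le
      show 1 / 2 < rateSeq r ψ (K1 ψ r + J)
      rw [phase2 J hJmin]
      exact (hc J).mp hJ1
    · apply le_csInf
      · exact ⟨K1 ψ r + J, by
          show 1 / 2 < rateSeq r ψ (K1 ψ r + J)
          rw [phase2 J hJmin]; exact (hc J).mp hJ1⟩
      · intro m hm
        by_contra hcon
        push_neg at hcon
        have hm' : 1 / 2 < rateSeq r ψ m := hm
        rcases lt_or_ge m (K1 ψ r) with hmK | hmK
        · have h1 := phase1 m (le_of_lt hmK)
          have h2 := hKmin m hmK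
          rw [h1] at hm'
          linarith
        · obtain ⟨i, rfl⟩ := Nat.exists_eq_add_of_le hmK
          have hiJ : i < J := by omega
          have h1 := phase2 i (fun i' hi' => hJmin i' (lt_trans hi' hiJ))
          rw [h1] at hm'
          exact hJmin i hiJ ((hc i).mpr hm')
end

section
/- (Quadratic form moment identities from the proof of Lemma A.6.) Let A be a deterministic symmetric n×n real matrix. Then for every index i, E[(WᵀAW)_{ii}] = Σ_{ii}·tr(A); and for all indices i ≠ j, E[ ((WᵀAW)_{ij})² ] = (Σ_{ij})²·(tr A)² + (Σ_{ii}Σ_{jj} + (Σ_{ij})²)·tr(A²) + ( E[(W_{1i}W_{1j})²] − 2(Σ_{ij})² − Σ_{ii}Σ_{jj} )·Σ_{r=1}^{n} A_{rr}². -/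
open MeasureTheory ProbabilityTheory

/-!
Statement 13: quadratic form moment identities from the proof of Lemma A.6.
-/

lemma qfm_pow_bound (x y : ℝ) (a b : ℕ) (ha : a ≤ 2) (hb : b ≤ 2) :
    |x ^ a * y ^ b| ≤ 1 + (x ^ 4 + y ^ 4) / 2 := by
  have key : ∀ (z : ℝ) (c : ℕ), c ≤ 2 → |z| ^ (2 * c) ≤ 1 + z ^ 4 := by
    intro z c hc
    rcases le_or_gt (|z|) 1 with h | h
    · have : |z| ^ (2 * c) ≤ 1 := pow_le_one₀ (abs_nonneg z) h
      nlinarith [pow_nonneg (sq_nonneg z) 2, sq_nonneg z, sq_nonneg (z^2)]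
    · have h1 : |z| ^ (2 * c) ≤ |z| ^ 4 := pow_le_pow_right₀ h.le (by omega)
      have : |z| ^ 4 = z ^ 4 := by rw [← abs_pow, abs_of_nonneg]; positivity
      nlinarith
  have h1 := key x a ha
  have h2 := key y b hb
  have hx : |x ^ a * y ^ b| = |x| ^ a * |y| ^ b := by
    rw [abs_mul, abs_pow, abs_pow]
  have amgm : |x| ^ a * |y| ^ b ≤ (|x| ^ (2*a) + |y| ^ (2*b)) / 2 := by
    have := sq_nonneg (|x| ^ a - |y| ^ b)
    have e1 : |x| ^ (2*a) = (|x|^a)^2 := by rw [pow_mul, pow_right_comm]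
    have e2 : |y| ^ (2*b) = (|y|^b)^2 := by rw [pow_mul, pow_right_comm]
    nlinarith
  rw [hx]; linarith

lemma qfm_int_pow_mul {Ω : Type*} [MeasurableSpace Ω] {μ : Measure Ω} [IsProbabilityMeasure μ]
    {X Y : Ω → ℝ} (hX : Measurable X) (hY : Measurable Y)
    (h4X : Integrable (fun ω => X ω ^ 4) μ) (h4Y : Integrable (fun ω => Y ω ^ 4) μ)
    (a b : ℕ) (ha : a ≤ 2) (hb : b ≤ 2) :
    Integrable (fun ω => X ω ^ a * Y ω ^ b) μ := by
  refine Integrable.mono' ((integrable_const 1).add ((h4X.add h4Y).div_const 2))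
    ((hX.pow_const a).mul (hY.pow_const b)).aestronglyMeasurable
    (Filter.Eventually.of_forall fun ω => ?_)
  have := qfm_pow_bound (X ω) (Y ω) a b ha hb
  simpa [abs_mul, abs_pow] using this

lemma qfm_prod_eq_pair {M : Type*} [CommMonoid M] {n : ℕ} (f : Fin n → M) (u v : Fin n)
    (huv : u ≠ v) (h : ∀ r, r ≠ u → r ≠ v → f r = 1) : ∏ r, f r = f u * f v := by
  rw [← Finset.prod_subset (Finset.subset_univ {u, v})
    (fun r _ hr => h r (fun h' => hr (by simp [h'])) (fun h' => hr (by simp [h'])))]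
  rw [Finset.prod_pair huv]

lemma qfm_prod_single_pow {n : ℕ} (x : Fin n → ℝ) (u : Fin n) :
    ∏ r, x r ^ (if r = u then 1 else 0) = x u := by
  have h : ∀ r, x r ^ (if r = u then 1 else 0) = if r = u then x r else 1 := by
    intro r; split <;> simp
  rw [Finset.prod_congr rfl fun r _ => h r, Finset.prod_ite_eq' Finset.univ u x]
  simp

lemma qfm_prod_dd {n : ℕ} (x : Fin n → ℝ) (u v : Fin n) :
    ∏ r, x r ^ ((if r = u then 1 else 0) + (if r = v then 1 else 0)) = x u * x v := by
  simp_rw [pow_add]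
  rw [Finset.prod_mul_distrib, qfm_prod_single_pow, qfm_prod_single_pow]

lemma qfm_master {Ω : Type*} [MeasurableSpace Ω] {μ : Measure Ω} [IsProbabilityMeasure μ]
    (n d : ℕ) (hn : 0 < n) (W : Fin n → Ω → (Fin d → ℝ))
    (hmeas : ∀ l, Measurable (W l))
    (hindep : iIndepFun W μ)
    (hident : ∀ l l', IdentDistrib (W l) (W l') μ μ)
    (h4 : ∀ l i, Integrable (fun ω => (W l ω i) ^ 4) μ)
    (i j : Fin d) (a b : Fin n → ℕ) (ha : ∀ r, a r ≤ 2) (hb : ∀ r, b r ≤ 2) :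
    Integrable (fun ω => ∏ r, (W r ω i ^ a r * W r ω j ^ b r)) μ ∧
    ∫ ω, ∏ r, (W r ω i ^ a r * W r ω j ^ b r) ∂μ
      = ∏ r, ∫ ω, (W ⟨0, hn⟩ ω i ^ a r * W ⟨0, hn⟩ ω j ^ b r) ∂μ := by
  letI : MeasureSpace (Fin d → ℝ) := ⟨μ.map (W ⟨0, hn⟩)⟩
  haveI : IsProbabilityMeasure (volume : Measure (Fin d → ℝ)) :=
    Measure.isProbabilityMeasure_map (hmeas _).aemeasurable
  set g : Fin n → (Fin d → ℝ) → ℝ := fun r w => w i ^ a r * w j ^ b r with hg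
  have hgmeas : ∀ r, Measurable (g r) := fun r =>
    (((measurable_pi_apply i).pow_const _).mul ((measurable_pi_apply j).pow_const _))
  have hgint : ∀ r, Integrable (g r) volume := by
    intro r
    rw [show (volume : Measure (Fin d → ℝ)) = μ.map (W ⟨0, hn⟩) from rfl,
      integrable_map_measure (hgmeas r).aestronglyMeasurable (hmeas _).aemeasurable]
    exact qfm_int_pow_mul ((hmeas _).eval) ((hmeas _).eval) (h4 _ i) (h4 _ j) _ _ (ha r) (hb r)
  set T : Ω → (Fin n → (Fin d → ℝ)) := fun ω l => W l ω with hT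
  have hTmeas : Measurable T := measurable_pi_lambda _ fun l => hmeas l
  have hmap : μ.map T = Measure.pi (fun _ : Fin n => (volume : Measure (Fin d → ℝ))) := by
    refine (Measure.pi_eq fun s hs => ?_).symm
    rw [Measure.map_apply hTmeas (MeasurableSet.univ_pi hs)]
    have hpre : T ⁻¹' (Set.pi Set.univ s) = ⋂ l ∈ Finset.univ, W l ⁻¹' s l := by
      ext ω; simp [Set.mem_pi, hT]
    rw [hpre, hindep.measure_inter_preimage_eq_mul Finset.univ (fun l _ => hs l)]
    refine Finset.prod_congr rfl fun l _ => ?_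
    rw [show (volume : Measure (Fin d → ℝ)) = μ.map (W ⟨0, hn⟩) from rfl,
      ← (hident l ⟨0, hn⟩).map_eq, Measure.map_apply (hmeas l) (hs l)]
  have hprod_int : Integrable (fun x : Fin n → (Fin d → ℝ) => ∏ r, g r (x r)) volume :=
    Integrable.fintype_prod hgint
  rw [MeasureTheory.volume_pi] at hprod_int
  have hFmeas : Measurable (fun x : Fin n → (Fin d → ℝ) => ∏ r, g r (x r)) :=
    Finset.measurable_prod _ fun r _ => (hgmeas r).comp (measurable_pi_apply r)
  have hcomp : (fun ω => ∏ r, (W r ω i ^ a r * W r ω j ^ b r))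
      = (fun x : Fin n → (Fin d → ℝ) => ∏ r, g r (x r)) ∘ T := rfl
  constructor
  · rw [hcomp]
    exact (integrable_map_measure hFmeas.aestronglyMeasurable hTmeas.aemeasurable).mp
      (hmap ▸ hprod_int)
  · have step : ∫ ω, ∏ r, (W r ω i ^ a r * W r ω j ^ b r) ∂μ
        = ∫ x, (∏ r, g r (x r)) ∂(μ.map T) :=
      (integral_map hTmeas.aemeasurable hFmeas.aestronglyMeasurable).symm
    rw [step, hmap, integral_fintype_prod_eq_prod (f := g)]
    refine Finset.prod_congr rfl fun r _ => ?_
    rw [show (volume : Measure (Fin d → ℝ)) = μ.map (W ⟨0, hn⟩) from rfl,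
      integral_map (hmeas _).aemeasurable (hgmeas r).aestronglyMeasurable]

lemma qfm_key {n : ℕ} (mm : ℕ → ℕ → ℝ) (h00 : mm 0 0 = 1) (h10 : mm 1 0 = 0)
    (h01 : mm 0 1 = 0) (l m l' m' : Fin n) :
    ∏ r, mm ((if r = l then 1 else 0) + (if r = l' then 1 else 0))
          ((if r = m then 1 else 0) + (if r = m' then 1 else 0))
    = (if l = m ∧ l' = m' then mm 1 1 * mm 1 1 else 0)
    + (if l = l' ∧ m = m' then mm 2 0 * mm 0 2 else 0)
    + (if l = m' ∧ m = l' then mm 1 1 * mm 1 1 else 0)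
    + (if l = m ∧ m = l' ∧ l' = m' then
        mm 2 2 - 2 * (mm 1 1 * mm 1 1) - mm 2 0 * mm 0 2 else 0) := by
  by_cases h1 : l = m
  · subst h1
    by_cases h2 : l' = m'
    · subst h2
      by_cases h3 : l = l'
      · subst h3
        rw [Finset.prod_eq_single_of_mem l (Finset.mem_univ l)
          (fun r _ hr => by simp [hr, h00])]
        simp only [if_pos rfl, if_pos (⟨rfl, rfl⟩ : l = l ∧ l = l),
          if_pos (⟨rfl, rfl, rfl⟩ : l = l ∧ l = l ∧ l = l)]
        simp; ring
      · rw [qfm_prod_eq_pair _ l l' h3 (fun r hr hr' => by simp [hr, hr', h00])]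
        simp [h3, Ne.symm h3]
    · by_cases h3 : l = l'
      · subst h3
        rw [Finset.prod_eq_zero (Finset.mem_univ m')
          (by simp [Ne.symm h2, h01])]
        simp [h2, Ne.symm h2]
      · by_cases h4 : l = m'
        · subst h4
          rw [Finset.prod_eq_zero (Finset.mem_univ l')
            (by simp [Ne.symm h3, h2, h10])]
          simp [h2, h3, Ne.symm h2, Ne.symm h3]
        · rw [Finset.prod_eq_zero (Finset.mem_univ l')
            (by simp [Ne.symm h3, h2, Ne.symm h4, h10])]
          simp [h2, h3, h4, Ne.symm h3]
  · by_cases h2 : l = l'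
    · subst h2
      by_cases h3 : m = m'
      · subst h3
        rw [qfm_prod_eq_pair _ l m h1 (fun r hr hr' => by simp [hr, hr', h00])]
        simp [h1, Ne.symm h1]
      · rw [Finset.prod_eq_zero (Finset.mem_univ m)
          (by simp [Ne.symm h1, h3, h10, h01])]
        simp [h1, h3, Ne.symm h1]
    · by_cases h3 : l = m'
      · subst h3
        by_cases h4 : m = l'
        · subst h4
          rw [qfm_prod_eq_pair _ l m h1 (fun r hr hr' => by simp [hr, hr', h00])]
          simp [h1, h2, Ne.symm h1, Ne.symm h2]
        · rw [Finset.prod_eq_zero (Finset.mem_univ l')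
            (by simp [Ne.symm h2, Ne.symm h4, h10])]
          simp [h1, h2, h4, Ne.symm h4]
      · rw [Finset.prod_eq_zero (Finset.mem_univ l)
          (by simp [h1, h2, h3, h10])]
        simp [h1, h2, h3]

lemma qfm_sum1 {n : ℕ} (A : Matrix (Fin n) (Fin n) ℝ) (x : ℝ) :
    ∑ l, ∑ m, ∑ l', ∑ m', A l m * A l' m' * (if l = m ∧ l' = m' then x else 0)
      = (∑ l, A l l) * (∑ l, A l l) * x := by
  simp only [mul_ite, mul_zero, ite_and]
  simp [Finset.sum_ite_eq, Finset.mul_sum, Finset.sum_mul]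
  rw [Finset.sum_comm]

lemma qfm_sum2 {n : ℕ} (A : Matrix (Fin n) (Fin n) ℝ) (y : ℝ) :
    ∑ l, ∑ m, ∑ l', ∑ m', A l m * A l' m' * (if l = l' ∧ m = m' then y else 0)
      = (∑ l, ∑ m, A l m * A l m) * y := by
  simp only [mul_ite, mul_zero, ite_and]
  simp [Finset.sum_ite_eq, Finset.mul_sum, Finset.sum_mul]

lemma qfm_sum3 {n : ℕ} (A : Matrix (Fin n) (Fin n) ℝ) (x : ℝ) :
    ∑ l, ∑ m, ∑ l', ∑ m', A l m * A l' m' * (if l = m' ∧ m = l' then x else 0)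
      = (∑ l, ∑ m, A l m * A m l) * x := by
  simp only [mul_ite, mul_zero, ite_and]
  simp [Finset.sum_ite_eq, Finset.mul_sum, Finset.sum_mul]

lemma qfm_sum4 {n : ℕ} (A : Matrix (Fin n) (Fin n) ℝ) (z : ℝ) :
    ∑ l, ∑ m, ∑ l', ∑ m', A l m * A l' m' * (if l = m ∧ m = l' ∧ l' = m' then z else 0)
      = (∑ l, A l l * A l l) * z := by
  simp only [mul_ite, mul_zero, ite_and]
  simp [Finset.sum_ite_eq, Finset.mul_sum, Finset.sum_mul]

theorem qfm_part1 {Ω : Type*} [MeasurableSpace Ω] {μ : Measure Ω} [IsProbabilityMeasure μ]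
    (n d : ℕ) (hn : 0 < n) (W : Fin n → Ω → (Fin d → ℝ))
    (hmeas : ∀ l, Measurable (W l))
    (hindep : iIndepFun W μ)
    (hident : ∀ l l', IdentDistrib (W l) (W l') μ μ)
    (hmean : ∀ l i, ∫ ω, W l ω i ∂μ = 0)
    (Sig : Matrix (Fin d) (Fin d) ℝ)
    (hSig : ∀ l i j, Sig i j = ∫ ω, W l ω i * W l ω j ∂μ)
    (h4 : ∀ l i, Integrable (fun ω => (W l ω i) ^ 4) μ)
    (A : Matrix (Fin n) (Fin n) ℝ) (i : Fin d) :
    ∫ ω, (∑ l, ∑ m, W l ω i * A l m * W m ω i) ∂μ = Sig i i * A.trace := by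
  have hXm : ∀ (l : Fin n) (k : Fin d), Measurable fun ω => W l ω k :=
    fun l k => (hmeas l).eval
  have hint : ∀ l m : Fin n, Integrable (fun ω => W l ω i * W m ω i) μ := by
    intro l m
    have := qfm_int_pow_mul (hXm l i) (hXm m i) (h4 l i) (h4 m i) 1 1 one_le_two one_le_two
    simpa using this
  have hval : ∀ l m : Fin n, ∫ ω, W l ω i * W m ω i ∂μ = if l = m then Sig i i else 0 := by
    intro l m
    by_cases h : l = m
    · subst h; rw [if_pos rfl, hSig l i i]
    · rw [if_neg h]
      have hind : IndepFun (fun ω => W l ω i) (fun ω => W m ω i) μ :=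
        (hindep.indepFun h).comp (measurable_pi_apply i) (measurable_pi_apply i)
      rw [hind.integral_fun_mul_eq_mul_integral (hXm l i).aestronglyMeasurable (hXm m i).aestronglyMeasurable,
        hmean l i, hmean m i, mul_zero]
  have hre : ∀ ω, (∑ l, ∑ m, W l ω i * A l m * W m ω i)
      = ∑ l, ∑ m, A l m * (W l ω i * W m ω i) := fun ω =>
    Finset.sum_congr rfl fun l _ => Finset.sum_congr rfl fun m _ => by ring
  simp_rw [hre]
  rw [integral_finset_sum _ (fun l _ =>
    integrable_finset_sum _ (fun m _ => (hint l m).const_mul (A l m)))]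
  simp_rw [integral_finset_sum _ (fun m (_ : m ∈ Finset.univ) => (hint _ m).const_mul _),
    MeasureTheory.integral_const_mul, hval]
  simp [Matrix.trace, Matrix.diag, Finset.mul_sum, mul_comm]

theorem qfm_part2 {Ω : Type*} [MeasurableSpace Ω] {μ : Measure Ω} [IsProbabilityMeasure μ]
    (n d : ℕ) (hn : 0 < n) (W : Fin n → Ω → (Fin d → ℝ))
    (hmeas : ∀ l, Measurable (W l))
    (hindep : iIndepFun W μ)
    (hident : ∀ l l', IdentDistrib (W l) (W l') μ μ)
    (hmean : ∀ l i, ∫ ω, W l ω i ∂μ = 0)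
    (Sig : Matrix (Fin d) (Fin d) ℝ)
    (hSig : ∀ l i j, Sig i j = ∫ ω, W l ω i * W l ω j ∂μ)
    (h4 : ∀ l i, Integrable (fun ω => (W l ω i) ^ 4) μ)
    (A : Matrix (Fin n) (Fin n) ℝ) (hA : A.IsSymm) (i j : Fin d) (hij : i ≠ j) :
    ∫ ω, (∑ l, ∑ m, W l ω i * A l m * W m ω j) ^ 2 ∂μ =
        (Sig i j) ^ 2 * A.trace ^ 2 +
        (Sig i i * Sig j j + (Sig i j) ^ 2) * (A * A).trace +
        ((∫ ω, (W ⟨0, hn⟩ ω i * W ⟨0, hn⟩ ω j) ^ 2 ∂μ)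
            - 2 * (Sig i j) ^ 2 - Sig i i * Sig j j) * ∑ r, (A r r) ^ 2 := by
  set mm : ℕ → ℕ → ℝ :=
    fun a b => ∫ ω, W ⟨0, hn⟩ ω i ^ a * W ⟨0, hn⟩ ω j ^ b ∂μ with hmm
  have h00 : mm 0 0 = 1 := by simp [hmm]
  have h10 : mm 1 0 = 0 := by simp [hmm, hmean]
  have h01 : mm 0 1 = 0 := by simp [hmm, hmean]
  have h11 : mm 1 1 = Sig i j := by
    rw [hSig ⟨0, hn⟩ i j]; simp [hmm]
  have h20 : mm 2 0 = Sig i i := by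
    rw [hSig ⟨0, hn⟩ i i]; simp [hmm, pow_two]
  have h02 : mm 0 2 = Sig j j := by
    rw [hSig ⟨0, hn⟩ j j]; simp [hmm, pow_two]
  have h22 : mm 2 2 = ∫ ω, (W ⟨0, hn⟩ ω i * W ⟨0, hn⟩ ω j) ^ 2 ∂μ := by
    simp [hmm, mul_pow]
  set aa : Fin n → Fin n → Fin n → ℕ :=
    fun u v r => (if r = u then 1 else 0) + (if r = v then 1 else 0) with haa
  have haa2 : ∀ u v r, aa u v r ≤ 2 := by
    intro u v r; simp only [haa]; split_ifs <;> norm_num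
  have hIprod : ∀ l l' m m' : Fin n,
      Integrable (fun ω => ∏ r, (W r ω i ^ aa l l' r * W r ω j ^ aa m m' r)) μ :=
    fun l l' m m' => (qfm_master n d hn W hmeas hindep hident h4 i j _ _
      (haa2 l l') (haa2 m m')).1
  have hVprod : ∀ l l' m m' : Fin n,
      ∫ ω, ∏ r, (W r ω i ^ aa l l' r * W r ω j ^ aa m m' r) ∂μ
        = ∏ r, mm (aa l l' r) (aa m m' r) :=
    fun l l' m m' => (qfm_master n d hn W hmeas hindep hident h4 i j _ _
      (haa2 l l') (haa2 m m')).2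
  have hexp : ∀ ω, (∑ l, ∑ m, W l ω i * A l m * W m ω j) ^ 2
      = ∑ l, ∑ m, ∑ l', ∑ m', A l m * A l' m' *
          ∏ r, (W r ω i ^ aa l l' r * W r ω j ^ aa m m' r) := by
    intro ω
    rw [sq, Finset.sum_mul_sum]
    refine Finset.sum_congr rfl fun l _ => ?_
    rw [Finset.sum_comm]
    refine Finset.sum_congr rfl fun m _ => ?_
    rw [Finset.sum_mul_sum]
    refine Finset.sum_congr rfl fun l' _ => Finset.sum_congr rfl fun m' _ => ?_
    rw [Finset.prod_mul_distrib, haa, qfm_prod_dd, qfm_prod_dd]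
    ring
  simp_rw [hexp]
  have step : ∫ ω, (∑ l, ∑ m, ∑ l', ∑ m', A l m * A l' m' *
          ∏ r, (W r ω i ^ aa l l' r * W r ω j ^ aa m m' r)) ∂μ
      = ∑ l, ∑ m, ∑ l', ∑ m', A l m * A l' m' * ∏ r, mm (aa l l' r) (aa m m' r) := by
    rw [integral_finset_sum _ (fun l _ => integrable_finset_sum _ fun m _ =>
      integrable_finset_sum _ fun l' _ => integrable_finset_sum _ fun m' _ =>
        (hIprod l l' m m').const_mul _)]
    refine Finset.sum_congr rfl fun l _ => ?_
    rw [integral_finset_sum _ (fun m _ => integrable_finset_sum _ fun l' _ =>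
      integrable_finset_sum _ fun m' _ => (hIprod l l' m m').const_mul _)]
    refine Finset.sum_congr rfl fun m _ => ?_
    rw [integral_finset_sum _ (fun l' _ =>
      integrable_finset_sum _ fun m' _ => (hIprod l l' m m').const_mul _)]
    refine Finset.sum_congr rfl fun l' _ => ?_
    rw [integral_finset_sum _ (fun m' _ => (hIprod l l' m m').const_mul _)]
    refine Finset.sum_congr rfl fun m' _ => ?_
    rw [MeasureTheory.integral_const_mul, hVprod]
  rw [step]
  have hkey : ∀ l m l' m' : Fin n, ∏ r, mm (aa l l' r) (aa m m' r)
      = (if l = m ∧ l' = m' then mm 1 1 * mm 1 1 else 0)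
      + (if l = l' ∧ m = m' then mm 2 0 * mm 0 2 else 0)
      + (if l = m' ∧ m = l' then mm 1 1 * mm 1 1 else 0)
      + (if l = m ∧ m = l' ∧ l' = m' then
          mm 2 2 - 2 * (mm 1 1 * mm 1 1) - mm 2 0 * mm 0 2 else 0) :=
    fun l m l' m' => qfm_key mm h00 h10 h01 l m l' m'
  simp_rw [hkey, mul_add, Finset.sum_add_distrib]
  rw [qfm_sum1, qfm_sum2, qfm_sum3, qfm_sum4]
  have htr : A.trace = ∑ l, A l l := by simp [Matrix.trace, Matrix.diag]
  have htr2 : (A * A).trace = ∑ l, ∑ m, A l m * A m l := by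
    simp [Matrix.trace, Matrix.diag, Matrix.mul_apply]
  have hsymm : ∀ l m : Fin n, A m l = A l m := fun l m => hA.apply l m
  have hmlm : (∑ l, ∑ m, A l m * A l m) = ∑ l, ∑ m, A l m * A m l :=
    Finset.sum_congr rfl fun l _ => Finset.sum_congr rfl fun m _ => by rw [hsymm]
  rw [h11, h20, h02, h22, htr, htr2, hmlm]
  have hd : (∑ r, (A r r) ^ 2) = ∑ r, A r r * A r r := by
    refine Finset.sum_congr rfl fun r _ => by rw [pow_two]
  rw [hd]
  ring

/-- Let the rows `W 0, …, W (n−1)` of `W` be i.i.d. mean-zero random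
vectors in `ℝ^d` with covariance `Σ'` and finite fourth moments, and let `A` be a
deterministic symmetric `n×n` matrix. Then `E[(WᵀAW)_{ii}] = Σ'_{ii}·tr A`, and for
`i ≠ j`, `E[((WᵀAW)_{ij})²] = (Σ'_{ij})²(tr A)² + (Σ'_{ii}Σ'_{jj} + (Σ'_{ij})²) tr(A²)
+ (E[(W_{1i}W_{1j})²] − 2(Σ'_{ij})² − Σ'_{ii}Σ'_{jj}) Σ_r A_{rr}²`. -/
theorem quadratic_form_moments
    {Ω : Type*} [MeasurableSpace Ω] {μ : Measure Ω} [IsProbabilityMeasure μ]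
    (n d : ℕ) (hn : 0 < n) (W : Fin n → Ω → (Fin d → ℝ))
    (hmeas : ∀ l, Measurable (W l))
    (hindep : iIndepFun W μ)
    (hident : ∀ l l', IdentDistrib (W l) (W l') μ μ)
    (hmean : ∀ l i, ∫ ω, W l ω i ∂μ = 0)
    (Sig : Matrix (Fin d) (Fin d) ℝ)
    (hSig : ∀ l i j, Sig i j = ∫ ω, W l ω i * W l ω j ∂μ)
    (h4 : ∀ l i, Integrable (fun ω => (W l ω i) ^ 4) μ)
    (A : Matrix (Fin n) (Fin n) ℝ) (hA : A.IsSymm) :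
    (∀ i : Fin d,
      ∫ ω, (∑ l, ∑ m, W l ω i * A l m * W m ω i) ∂μ = Sig i i * A.trace) ∧
    (∀ i j : Fin d, i ≠ j →
      ∫ ω, (∑ l, ∑ m, W l ω i * A l m * W m ω j) ^ 2 ∂μ =
        (Sig i j) ^ 2 * A.trace ^ 2 +
        (Sig i i * Sig j j + (Sig i j) ^ 2) * (A * A).trace +
        ((∫ ω, (W ⟨0, hn⟩ ω i * W ⟨0, hn⟩ ω j) ^ 2 ∂μ)
            - 2 * (Sig i j) ^ 2 - Sig i i * Sig j j) * ∑ r, (A r r) ^ 2) :=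
  ⟨fun i => qfm_part1 n d hn W hmeas hindep hident hmean Sig hSig h4 A i,
   fun i j hij => qfm_part2 n d hn W hmeas hindep hident hmean Sig hSig h4 A hA i j hij⟩
end
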